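/- Let k ∈ ℕ, ρ > 2 and M > 1/2. There exists C > 0 such that for every a > 0, the function F_a(t) = t^{k+1/2} ∂_t^k ( t^{−M} e^{−a/t} ) satisfies: (i) sup_{t>0} |F_a(t)| ≤ C a^{1/2 − M}; (ii) ( ∫₀^∞ |F_a(t)|² dt/t )^{1/2} ≤ C a^{1/2 − M}; (iii) V_ρ(F_a) ≤ C a^{1/2 − M}. -/

import Mathlib

open MeasureTheory Matrix
open scoped ENNReal

noncomputable section

/-- The squared Euclidean norm `|x|²` on `ℝ^d`. -/
def nrm2 {d : ℕ} (x : Fin d → ℝ) : ℝ := ∑ i, x i ^ 2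

/-- The Euclidean norm `|x|` on `ℝ^d`. -/
def nrm {d : ℕ} (x : Fin d → ℝ) : ℝ := Real.sqrt (nrm2 x)

/-- The `ρ`-variation of a function `g` on `(0,∞)`:
the supremum over all finite decreasing sequences `t₁ > t₂ > … > t_ℓ > 0` of
`(Σ ‖g(t_{n+1}) - g(t_n)‖^ρ)^{1/ρ}`. -/
def varOp {E : Type*} [NormedAddCommGroup E] (ρ : ℝ) (g : ℝ → E) : ℝ≥0∞ :=
  ⨆ (ℓ : ℕ) (t : Fin (ℓ+1) → ℝ) (_ : StrictAnti t) (_ : ∀ i, 0 < t i),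
    ENNReal.ofReal ((∑ n : Fin ℓ, ‖g (t n.succ) - g (t n.castSucc)‖ ^ ρ) ^ (1/ρ))

/-- The function `F_a(t) = t^{k+1/2} ∂_t^k (t^{-M} e^{-a/t})`. -/
def Fresol (k : ℕ) (M : ℝ) (a : ℝ) (t : ℝ) : ℝ :=
  t ^ ((k : ℝ) + 1/2) * iteratedDeriv k (fun s => s ^ (-M) * Real.exp (-a/s)) t

open Finset

/-- basic term -/
def trm (j : ℕ) (γ a t : ℝ) : ℝ := a ^ j * (t ^ γ * Real.exp (-a/t))

lemma trm_nonneg {j : ℕ} {γ a t : ℝ} (ha : 0 ≤ a) (ht : 0 ≤ t) : 0 ≤ trm j γ a t := by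
  unfold trm
  positivity

lemma hasDerivAt_trm (j : ℕ) (γ a : ℝ) {t : ℝ} (ht : 0 < t) :
    HasDerivAt (fun s => trm j γ a s)
      (γ * trm j (γ-1) a t + a * trm j (γ-2) a t) t := by
  have h1 : HasDerivAt (fun s : ℝ => s ^ γ) (γ * t ^ (γ-1)) t :=
    Real.hasDerivAt_rpow_const (Or.inl ht.ne')
  have h2 : HasDerivAt (fun s : ℝ => -a/s) (a / t^2) t := by
    have h := (hasDerivAt_inv ht.ne').const_mul (-a)
    have : (fun s : ℝ => -a * s⁻¹) = fun s : ℝ => -a/s := by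
      funext s; rw [div_eq_mul_inv]
    rw [this] at h
    refine h.congr_deriv ?_
    ring
  have h3 := h2.exp
  have h4 := (h1.mul h3).const_mul (a ^ j)
  refine h4.congr_deriv ?_
  have e1 : t ^ (γ - 1) = t ^ γ / t := by
    rw [Real.rpow_sub ht, Real.rpow_one]
  have e2 : t ^ (γ - 2) = t ^ γ / t ^ 2 := by
    rw [Real.rpow_sub ht, Real.rpow_two]
  rw [trm, trm, e1, e2]
  field_simp

lemma continuousOn_trm (j : ℕ) (γ a : ℝ) :
    ContinuousOn (fun t => trm j γ a t) (Set.Ioi 0) := by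
  intro t ht
  exact ((hasDerivAt_trm j γ a ht).continuousAt).continuousWithinAt

/-- key rescaling: `trm j (α-j) a t = a^α * ((t/a)^(α-j) * exp (-1/(t/a)))` -/
lemma trm_eq_scale (j : ℕ) (α : ℝ) {a t : ℝ} (ha : 0 < a) (ht : 0 < t) :
    trm j (α - j) a t = a ^ α * ((t/a) ^ (α - j) * Real.exp (-(1/(t/a)))) := by
  have hs : (0:ℝ) < t/a := div_pos ht ha
  have h1 : (t/a) ^ (α - (j:ℝ)) = t ^ (α - (j:ℝ)) / a ^ (α - (j:ℝ)) :=
    Real.div_rpow ht.le ha.le _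
  have h2 : a ^ α / a ^ (α - (j:ℝ)) = a ^ (j:ℕ) := by
    rw [← Real.rpow_natCast a j, ← Real.rpow_sub ha]
    ring_nf
  have h3 : -(1/(t/a)) = -a/t := by
    field_simp
  rw [trm, h1, h3]
  have h4 : a ^ α * (t ^ (α - (j:ℝ)) / a ^ (α - (j:ℝ)) * Real.exp (-a/t))
      = (a ^ α / a ^ (α - (j:ℝ))) * (t ^ (α - (j:ℝ)) * Real.exp (-a/t)) := by
    ring
  rw [h4, h2]

lemma trm_envelope (α : ℝ) (hα : α < 0) (j : ℕ) :
    ∃ B > 0, ∀ a t : ℝ, 0 < a → 0 < t →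
      trm j (α - j) a t ≤ B * (a ^ α * min ((t/a) ^ (1:ℝ)) ((t/a) ^ α)) := by
  set n : ℕ := j + 1 + ⌈-α⌉₊ with hn
  have hB : (0:ℝ) < (n.factorial : ℝ) := by positivity
  refine ⟨(n.factorial : ℝ), hB, fun a t ha ht => ?_⟩
  rw [trm_eq_scale j α ha ht]
  set s := t/a with hsdef
  have hs0 : (0:ℝ) < s := div_pos ht ha
  have key : s ^ (α - (j:ℝ)) * Real.exp (-(1/s)) ≤ (n.factorial : ℝ) * min (s ^ (1:ℝ)) (s ^ α) := by
    rcases le_total 1 s with h1 | h1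
    · have hmin : min (s ^ (1:ℝ)) (s ^ α) = s ^ α := min_eq_right
        (Real.rpow_le_rpow_of_exponent_le h1 (by linarith))
      rw [hmin]
      have h2 : s ^ (α - (j:ℝ)) ≤ s ^ α :=
        Real.rpow_le_rpow_of_exponent_le h1 (by simp [Nat.cast_nonneg])
      have h3 : Real.exp (-(1/s)) ≤ 1 := by
        rw [Real.exp_le_one_iff]
        have : (0:ℝ) ≤ 1/s := by positivity
        linarith
      have h4 : (1:ℝ) ≤ (n.factorial : ℝ) := by exact_mod_cast Nat.one_le_iff_ne_zero.2 (Nat.factorial_ne_zero n)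
      calc s ^ (α - (j:ℝ)) * Real.exp (-(1/s)) ≤ s ^ α * 1 :=
            mul_le_mul h2 h3 (Real.exp_pos _).le (Real.rpow_nonneg hs0.le _)
        _ = 1 * s ^ α := by ring
        _ ≤ (n.factorial : ℝ) * s ^ α := mul_le_mul_of_nonneg_right h4 (Real.rpow_nonneg hs0.le _)
    · have hmin : min (s ^ (1:ℝ)) (s ^ α) = s ^ (1:ℝ) := min_eq_left
        (Real.rpow_le_rpow_of_exponent_ge hs0 h1 (by linarith))
      rw [hmin, Real.rpow_one]
      have hexp : Real.exp (-(1/s)) ≤ (n.factorial : ℝ) * s ^ (n:ℕ) := by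
        have h := Real.pow_div_factorial_le_exp (x := 1/s) (by positivity) n
        have h2 : (0:ℝ) < (1/s)^n / (n.factorial : ℝ) := by positivity
        rw [Real.exp_neg]
        calc (Real.exp (1/s))⁻¹ ≤ ((1/s)^n / (n.factorial : ℝ))⁻¹ := by
              apply inv_anti₀ h2 h
          _ = (n.factorial : ℝ) * s ^ (n:ℕ) := by
              rw [div_pow, one_pow]
              field_simp
      have hcast : s ^ (n:ℕ) = s ^ ((n:ℕ):ℝ) := (Real.rpow_natCast s n).symm
      have hne : -α ≤ (⌈-α⌉₊ : ℝ) := Nat.le_ceil _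
      have hexpo : (1:ℝ) ≤ α - (j:ℝ) + (n:ℕ) := by
        rw [hn]
        push_cast
        linarith
      calc s ^ (α - (j:ℝ)) * Real.exp (-(1/s))
          ≤ s ^ (α - (j:ℝ)) * ((n.factorial : ℝ) * s ^ (n:ℕ)) :=
            mul_le_mul_of_nonneg_left hexp (Real.rpow_nonneg hs0.le _)
        _ = (n.factorial : ℝ) * s ^ (α - (j:ℝ) + (n:ℕ)) := by
            rw [hcast, Real.rpow_add hs0]; ring
        _ ≤ (n.factorial : ℝ) * s ^ (1:ℝ) := by
            apply mul_le_mul_of_nonneg_left _ hB.le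
            exact Real.rpow_le_rpow_of_exponent_ge hs0 h1 hexpo
        _ = (n.factorial : ℝ) * s := by rw [Real.rpow_one]
  calc (a:ℝ) ^ α * (s ^ (α - (j:ℝ)) * Real.exp (-(1/s)))
      ≤ a ^ α * ((n.factorial : ℝ) * min (s ^ (1:ℝ)) (s ^ α)) :=
        mul_le_mul_of_nonneg_left key (Real.rpow_nonneg ha.le _)
    _ = (n.factorial : ℝ) * (a ^ α * min (s ^ (1:ℝ)) (s ^ α)) := by ring

lemma env_nonneg (α : ℝ) {a t : ℝ} (ha : 0 < a) (ht : 0 < t) :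
    0 ≤ a ^ α * min ((t/a) ^ (1:ℝ)) ((t/a) ^ α) :=
  mul_nonneg (Real.rpow_nonneg ha.le _)
    (le_min (Real.rpow_nonneg (by positivity) _) (Real.rpow_nonneg (by positivity) _))

lemma sum_envelope (α : ℝ) (hα : α < 0) (m : ℕ) (d : ℕ → ℝ) (j : ℕ → ℕ) :
    ∃ B > 0, ∀ a t : ℝ, 0 < a → 0 < t →
      |∑ i ∈ Finset.range m, d i * trm (j i) (α - j i) a t|
        ≤ B * (a ^ α * min ((t/a) ^ (1:ℝ)) ((t/a) ^ α)) := by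
  induction m with
  | zero =>
      refine ⟨1, one_pos, fun a t ha ht => ?_⟩
      simp only [Finset.sum_range_zero, abs_zero, one_mul]
      exact env_nonneg α ha ht
  | succ m ih =>
      obtain ⟨B, hB, hBle⟩ := ih
      obtain ⟨B', hB', hB'le⟩ := trm_envelope α hα (j m)
      refine ⟨B + (|d m| + 1) * B', by positivity, fun a t ha ht => ?_⟩
      rw [Finset.sum_range_succ]
      have henv := env_nonneg α ha ht
      have h1 : |d m * trm (j m) (α - j m) a t|
          ≤ (|d m| + 1) * (B' * (a ^ α * min ((t/a) ^ (1:ℝ)) ((t/a) ^ α))) := by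
        rw [abs_mul, abs_of_nonneg (trm_nonneg ha.le ht.le)]
        have h2 := hB'le a t ha ht
        have h3 : 0 ≤ trm (j m) (α - j m) a t := trm_nonneg ha.le ht.le
        nlinarith [abs_nonneg (d m)]
      calc |∑ i ∈ Finset.range m, d i * trm (j i) (α - j i) a t
              + d m * trm (j m) (α - j m) a t|
          ≤ |∑ i ∈ Finset.range m, d i * trm (j i) (α - j i) a t|
              + |d m * trm (j m) (α - j m) a t| := abs_add_le _ _
        _ ≤ B * (a ^ α * min ((t/a) ^ (1:ℝ)) ((t/a) ^ α))
              + (|d m| + 1) * (B' * (a ^ α * min ((t/a) ^ (1:ℝ)) ((t/a) ^ α))) :=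
            add_le_add (hBle a t ha ht) h1
        _ = (B + (|d m| + 1) * B') * (a ^ α * min ((t/a) ^ (1:ℝ)) ((t/a) ^ α)) := by ring

/-- coefficients in the explicit formula for the iterated derivative -/
def cf (M : ℝ) : ℕ → ℕ → ℝ
  | 0, i => if i = 0 then 1 else 0
  | k+1, i => (-(M + k + i)) * cf M k i + (if i = 0 then 0 else cf M k (i-1))

lemma cf_eq_zero (M : ℝ) : ∀ k i, k < i → cf M k i = 0 := by
  intro k
  induction k with
  | zero =>
      intro i hi
      match i, hi with
      | i+1, _ => simp [cf]
  | succ k ih =>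
      intro i hi
      match i, hi with
      | i+1, hi =>
        simp only [cf, Nat.succ_ne_zero, if_false, Nat.add_sub_cancel]
        rw [ih (i+1) (by omega), ih i (by omega)]
        ring

lemma iteratedDeriv_formula (k : ℕ) (M a : ℝ) :
    ∀ t : ℝ, 0 < t →
      iteratedDeriv k (fun s => s ^ (-M) * Real.exp (-a/s)) t
        = ∑ i ∈ Finset.range (k+1), cf M k i * trm i (-M - k - i) a t := by
  induction k with
  | zero =>
      intro t ht
      simp only [iteratedDeriv_zero, Finset.sum_range_one, cf, if_pos rfl, trm]
      norm_num
  | succ k ih =>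
      intro t ht
      rw [iteratedDeriv_succ]
      have heq : (fun u => iteratedDeriv k (fun s => s ^ (-M) * Real.exp (-a/s)) u)
          =ᶠ[nhds t] fun u => ∑ i ∈ Finset.range (k+1), cf M k i * trm i (-M - k - i) a u := by
        filter_upwards [isOpen_Ioi.mem_nhds ht] with u hu
        exact ih u hu
      rw [heq.deriv_eq]
      have hD : HasDerivAt
          (fun u => ∑ i ∈ Finset.range (k+1), cf M k i * trm i (-M - k - i) a u)
          (∑ i ∈ Finset.range (k+1), cf M k i *
            ((-M - k - i) * trm i (-M - k - i - 1) a t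
              + a * trm i (-M - k - i - 2) a t)) t := by
        apply HasDerivAt.fun_sum
        intro i _
        exact (hasDerivAt_trm i (-M - k - i) a ht).const_mul _
      rw [hD.deriv]
      push_cast
      have hLHS : ∀ i : ℕ, cf M k i *
            ((-M - (k:ℝ) - i) * trm i (-M - (k:ℝ) - i - 1) a t
              + a * trm i (-M - (k:ℝ) - i - 2) a t)
          = (-(M + (k:ℝ) + i)) * cf M k i * trm i (-M - ((k:ℝ)+1) - i) a t
            + cf M k i * trm (i+1) (-M - ((k:ℝ)+1) - ((i:ℝ)+1)) a t := by
        intro i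
        have e1 : -M - (k:ℝ) - i - 1 = -M - ((k:ℝ)+1) - i := by ring
        have e2 : -M - (k:ℝ) - i - 2 = -M - ((k:ℝ)+1) - ((i:ℝ)+1) := by ring
        have e3 : a * trm i (-M - ((k:ℝ)+1) - ((i:ℝ)+1)) a t
            = trm (i+1) (-M - ((k:ℝ)+1) - ((i:ℝ)+1)) a t := by
          rw [trm, trm, pow_succ]; ring
        rw [e1, e2, e3]; ring
      rw [Finset.sum_congr rfl (fun i _ => hLHS i), Finset.sum_add_distrib]
      have htarget : ∀ i : ℕ, cf M (k+1) i * trm i (-M - ((k:ℝ)+1) - i) a t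
          = (-(M + (k:ℝ) + i)) * cf M k i * trm i (-M - ((k:ℝ)+1) - i) a t
            + (if i = 0 then 0 else cf M k (i-1)) * trm i (-M - ((k:ℝ)+1) - i) a t := by
        intro i
        simp only [cf]
        ring
      rw [Finset.sum_congr rfl (fun i _ => htarget i), Finset.sum_add_distrib]
      congr 1
      · conv_rhs => rw [Finset.sum_range_succ]
        rw [cf_eq_zero M k (k+1) (by omega)]
        simp
      · conv_rhs => rw [Finset.sum_range_succ']
        simp only [if_true, zero_mul, add_zero]
        apply Finset.sum_congr rfl
        intro i _
        rw [if_neg (Nat.succ_ne_zero i), Nat.add_sub_cancel]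
        congr 1
        push_cast
        ring

lemma Fresol_formula (k : ℕ) (M a : ℝ) {t : ℝ} (ht : 0 < t) :
    Fresol k M a t = ∑ i ∈ Finset.range (k+1), cf M k i * trm i ((1/2 - M) - i) a t := by
  rw [Fresol, iteratedDeriv_formula k M a t ht, Finset.mul_sum]
  apply Finset.sum_congr rfl
  intro i _
  rw [trm, trm]
  have e : t ^ ((1/2 - M) - (i:ℝ)) = t ^ ((k:ℝ) + 1/2) * t ^ (-M - (k:ℝ) - i) := by
    rw [← Real.rpow_add ht]
    congr 1
    ring
  rw [e]
  ring

/-- the pointwise derivative of `Fresol` on `(0,∞)` -/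
def FD (k : ℕ) (M a t : ℝ) : ℝ :=
  (∑ i ∈ Finset.range (k+1), (cf M k i * ((1/2 - M) - i)) * trm i ((-1/2 - M) - i) a t)
  + ∑ i ∈ Finset.range (k+1), cf M k i * trm (i+1) ((-1/2 - M) - ((i+1:ℕ):ℝ)) a t

lemma hasDerivAt_Fresol (k : ℕ) (M a : ℝ) {t : ℝ} (ht : 0 < t) :
    HasDerivAt (Fresol k M a) (FD k M a t) t := by
  have hD : HasDerivAt
      (fun u => ∑ i ∈ Finset.range (k+1), cf M k i * trm i ((1/2 - M) - i) a u)
      (∑ i ∈ Finset.range (k+1), cf M k i *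
        (((1/2 - M) - i) * trm i ((1/2 - M) - i - 1) a t
          + a * trm i ((1/2 - M) - i - 2) a t)) t := by
    apply HasDerivAt.fun_sum
    intro i _
    exact (hasDerivAt_trm i ((1/2 - M) - i) a ht).const_mul _
  have heqd : (∑ i ∈ Finset.range (k+1), cf M k i *
        (((1/2 - M) - i) * trm i ((1/2 - M) - i - 1) a t
          + a * trm i ((1/2 - M) - i - 2) a t)) = FD k M a t := by
    rw [FD, ← Finset.sum_add_distrib]
    apply Finset.sum_congr rfl
    intro i _
    have e1 : (1/2 - M) - (i:ℝ) - 1 = (-1/2 - M) - i := by ring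
    have e2 : (1/2 - M) - (i:ℝ) - 2 = (-1/2 - M) - ((i+1:ℕ):ℝ) := by push_cast; ring
    have e3 : a * trm i ((-1/2 - M) - ((i+1:ℕ):ℝ)) a t
        = trm (i+1) ((-1/2 - M) - ((i+1:ℕ):ℝ)) a t := by
      rw [trm, trm, pow_succ]; ring
    rw [e1, e2, e3]
    ring
  rw [heqd] at hD
  apply hD.congr_of_eventuallyEq
  filter_upwards [isOpen_Ioi.mem_nhds ht] with u hu
  exact Fresol_formula k M a hu

lemma min_env_le_one (α : ℝ) (hα : α < 0) {a t : ℝ} (ha : 0 < a) (ht : 0 < t) :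
    min ((t/a) ^ (1:ℝ)) ((t/a) ^ α) ≤ 1 := by
  rcases le_total (t/a) 1 with h | h
  · exact le_trans (min_le_left _ _) (by rw [Real.rpow_one]; exact h)
  · exact le_trans (min_le_right _ _)
      (Real.rpow_le_one_of_one_le_of_nonpos h hα.le)

lemma Fresol_envelope (k : ℕ) (M : ℝ) (hM : 1/2 < M) :
    ∃ B > 0, ∀ a t : ℝ, 0 < a → 0 < t →
      |Fresol k M a t| ≤ B * ((a:ℝ) ^ (1/2 - M) * min ((t/a) ^ (1:ℝ)) ((t/a) ^ (1/2 - M))) := by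
  obtain ⟨B, hB, hle⟩ := sum_envelope (1/2 - M) (by linarith) (k+1) (cf M k) (fun i => i)
  refine ⟨B, hB, fun a t ha ht => ?_⟩
  rw [Fresol_formula k M a ht]
  exact hle a t ha ht

lemma FD_envelope (k : ℕ) (M : ℝ) (hM : 1/2 < M) :
    ∃ B > 0, ∀ a t : ℝ, 0 < a → 0 < t →
      |FD k M a t| ≤ B * ((a:ℝ) ^ (-1/2 - M) * min ((t/a) ^ (1:ℝ)) ((t/a) ^ (-1/2 - M))) := by
  obtain ⟨B1, hB1, h1⟩ := sum_envelope (-1/2 - M) (by linarith)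
    (k+1) (fun i => cf M k i * ((1/2 - M) - i)) (fun i => i)
  obtain ⟨B2, hB2, h2⟩ := sum_envelope (-1/2 - M) (by linarith)
    (k+1) (cf M k) (fun i => i + 1)
  refine ⟨B1 + B2, by positivity, fun a t ha ht => ?_⟩
  rw [FD]
  calc |_ + _| ≤ _ + _ := abs_add_le _ _
    _ ≤ B1 * ((a:ℝ) ^ (-1/2 - M) * min ((t/a) ^ (1:ℝ)) ((t/a) ^ (-1/2 - M)))
        + B2 * ((a:ℝ) ^ (-1/2 - M) * min ((t/a) ^ (1:ℝ)) ((t/a) ^ (-1/2 - M))) :=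
      add_le_add (h1 a t ha ht) (h2 a t ha ht)
    _ = (B1 + B2) * ((a:ℝ) ^ (-1/2 - M) * min ((t/a) ^ (1:ℝ)) ((t/a) ^ (-1/2 - M))) := by ring


lemma l2_bound (M : ℝ) (hM : 1/2 < M) (B : ℝ) (hB : 0 < B)
    (F : ℝ → ℝ → ℝ)
    (henv : ∀ a t : ℝ, 0 < a → 0 < t →
      |F a t| ≤ B * ((a:ℝ) ^ (1/2 - M) * min ((t/a) ^ (1:ℝ)) ((t/a) ^ (1/2 - M)))) :
    ∀ a : ℝ, 0 < a →
      (∫⁻ t in Set.Ioi (0:ℝ), ENNReal.ofReal ((F a t) ^ 2 / t))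
        ≤ ENNReal.ofReal ((B^2 * (1 + (2*M - 1)⁻¹)) * a ^ (1 - 2*M)) := by
  intro a ha
  have hM1 : (0:ℝ) < 2*M - 1 := by linarith
  have hP : (0:ℝ) ≤ a ^ ((1:ℝ)/2 - M) := Real.rpow_nonneg ha.le _
  -- pointwise bound on Ioc 0 a
  have key1 : ∀ t ∈ Set.Ioc (0:ℝ) a, ENNReal.ofReal ((F a t)^2 / t)
      ≤ ENNReal.ofReal (B^2 * a ^ (-(2*M))) := by
    intro t ht
    apply ENNReal.ofReal_le_ofReal
    have h1 := henv a t ha ht.1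
    have hmin : min ((t/a) ^ (1:ℝ)) ((t/a) ^ ((1:ℝ)/2 - M)) ≤ t/a :=
      (min_le_left _ _).trans_eq (Real.rpow_one _)
    have h2 : |F a t| ≤ B * (a ^ ((1:ℝ)/2 - M) * (t/a)) := by
      refine h1.trans ?_
      gcongr
    have h3 : (F a t)^2 ≤ (B * (a ^ ((1:ℝ)/2 - M) * (t/a)))^2 := by
      rw [← sq_abs]
      exact pow_le_pow_left₀ (abs_nonneg _) h2 2
    have e2 : (a ^ ((1:ℝ)/2 - M))^2 = a ^ (1 - 2*M) := by
      rw [← Real.rpow_natCast (a ^ ((1:ℝ)/2 - M)) 2, ← Real.rpow_mul ha.le]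
      congr 1
      push_cast
      ring
    have h4 : (F a t)^2 / t ≤ B^2 * (a ^ (1 - 2*M) * (t / a^2)) := by
      rw [div_le_iff₀ ht.1]
      calc (F a t)^2 ≤ (B * (a ^ ((1:ℝ)/2 - M) * (t/a)))^2 := h3
        _ = B^2 * ((a ^ ((1:ℝ)/2 - M))^2 * (t/a)^2) := by ring
        _ = B^2 * (a ^ (1 - 2*M) * (t/a)^2) := by rw [e2]
        _ = B^2 * (a ^ (1 - 2*M) * (t / a^2)) * t := by
            field_simp
    refine h4.trans ?_
    have h5 : t / a^2 ≤ 1/a := by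
      rw [div_le_div_iff₀ (by positivity) ha]
      nlinarith [ht.2]
    have e3 : a ^ (1 - 2*M) * (1/a) = a ^ (-(2*M)) := by
      rw [one_div, ← Real.rpow_neg_one a, ← Real.rpow_add ha]
      congr 1
      ring
    calc B^2 * (a ^ (1 - 2*M) * (t / a^2))
        ≤ B^2 * (a ^ (1 - 2*M) * (1/a)) := by
          gcongr
      _ = B^2 * a ^ (-(2*M)) := by rw [e3]
  -- pointwise bound on Ioi a
  have key2 : ∀ t ∈ Set.Ioi a, ENNReal.ofReal ((F a t)^2 / t)
      ≤ ENNReal.ofReal (B^2 * t ^ (-(2*M))) := by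
    intro t ht
    have htpos : 0 < t := ha.trans ht
    apply ENNReal.ofReal_le_ofReal
    have h1 := henv a t ha htpos
    have hmin : min ((t/a) ^ (1:ℝ)) ((t/a) ^ ((1:ℝ)/2 - M)) ≤ (t/a) ^ ((1:ℝ)/2 - M) :=
      min_le_right _ _
    have h2 : |F a t| ≤ B * t ^ ((1:ℝ)/2 - M) := by
      refine h1.trans ?_
      have e : a ^ ((1:ℝ)/2 - M) * (t/a) ^ ((1:ℝ)/2 - M) = t ^ ((1:ℝ)/2 - M) := by
        rw [← Real.mul_rpow ha.le (by positivity)]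
        congr 1
        field_simp
      calc B * (a ^ ((1:ℝ)/2 - M) * min ((t/a) ^ (1:ℝ)) ((t/a) ^ ((1:ℝ)/2 - M)))
          ≤ B * (a ^ ((1:ℝ)/2 - M) * (t/a) ^ ((1:ℝ)/2 - M)) := by gcongr
        _ = B * t ^ ((1:ℝ)/2 - M) := by rw [e]
    have h3 : (F a t)^2 ≤ (B * t ^ ((1:ℝ)/2 - M))^2 := by
      rw [← sq_abs]
      exact pow_le_pow_left₀ (abs_nonneg _) h2 2
    have e2 : (t ^ ((1:ℝ)/2 - M))^2 = t ^ (1 - 2*M) := by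
      rw [← Real.rpow_natCast (t ^ ((1:ℝ)/2 - M)) 2, ← Real.rpow_mul htpos.le]
      congr 1
      push_cast
      ring
    rw [div_le_iff₀ htpos]
    calc (F a t)^2 ≤ (B * t ^ ((1:ℝ)/2 - M))^2 := h3
      _ = B^2 * t ^ (1 - 2*M) := by rw [← e2]; ring
      _ = B^2 * t ^ (-(2*M)) * t := by
          rw [mul_assoc, ← Real.rpow_add_one htpos.ne',
            show -(2*M)+1 = 1-2*M from by ring]
  -- split the domain
  rw [← Set.Ioc_union_Ioi_eq_Ioi ha.le,
    lintegral_union measurableSet_Ioi (Set.Ioc_disjoint_Ioi le_rfl)]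
  have part1 : (∫⁻ t in Set.Ioc (0:ℝ) a, ENNReal.ofReal ((F a t)^2 / t))
      ≤ ENNReal.ofReal (B^2 * a ^ (1 - 2*M)) := by
    calc (∫⁻ t in Set.Ioc (0:ℝ) a, ENNReal.ofReal ((F a t)^2 / t))
        ≤ ∫⁻ _ in Set.Ioc (0:ℝ) a, ENNReal.ofReal (B^2 * a ^ (-(2*M))) :=
          setLIntegral_mono measurable_const key1
      _ = ENNReal.ofReal (B^2 * a ^ (-(2*M))) * ENNReal.ofReal a := by
          rw [setLIntegral_const, Real.volume_Ioc, sub_zero]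
      _ = ENNReal.ofReal (B^2 * a ^ (-(2*M)) * a) := by
          rw [← ENNReal.ofReal_mul (by positivity)]
      _ = ENNReal.ofReal (B^2 * a ^ (1 - 2*M)) := by
          rw [mul_assoc, ← Real.rpow_add_one ha.ne',
            show -(2*M)+1 = 1-2*M from by ring]
  have hint : IntegrableOn (fun t : ℝ => B^2 * t ^ (-(2*M))) (Set.Ioi a) :=
    (integrableOn_Ioi_rpow_of_lt (by linarith) ha).const_mul _
  have part2 : (∫⁻ t in Set.Ioi a, ENNReal.ofReal ((F a t)^2 / t))
      ≤ ENNReal.ofReal (B^2 * (a ^ (1 - 2*M) * (2*M - 1)⁻¹)) := by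
    have step1 : (∫⁻ t in Set.Ioi a, ENNReal.ofReal ((F a t)^2 / t))
        ≤ ∫⁻ t in Set.Ioi a, ENNReal.ofReal (B^2 * t ^ (-(2*M))) := by
      refine lintegral_mono_ae ((ae_restrict_iff' measurableSet_Ioi).2 ?_)
      exact Filter.Eventually.of_forall key2
    refine step1.trans ?_
    rw [← ofReal_integral_eq_lintegral_ofReal hint]
    · apply ENNReal.ofReal_le_ofReal
      rw [MeasureTheory.integral_const_mul, integral_Ioi_rpow_of_lt (by linarith) ha]
      apply le_of_eq
      congr 1
      rw [show -(2*M) + 1 = 1 - 2*M from by ring]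
      rw [div_eq_mul_inv, show (1 - 2*M)⁻¹ = -((2*M-1)⁻¹) from by
        rw [show (1-2*M) = -(2*M-1) from by ring, inv_neg]]
      ring
    · filter_upwards [ae_restrict_mem measurableSet_Ioi] with t ht
      have : (0:ℝ) < t := ha.trans ht
      positivity
  calc _ ≤ ENNReal.ofReal (B^2 * a ^ (1 - 2*M))
        + ENNReal.ofReal (B^2 * (a ^ (1 - 2*M) * (2*M - 1)⁻¹)) := add_le_add part1 part2
    _ = ENNReal.ofReal (B^2 * a ^ (1 - 2*M) + B^2 * (a ^ (1 - 2*M) * (2*M - 1)⁻¹)) := by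
        rw [← ENNReal.ofReal_add (by positivity) (by positivity)]
    _ = ENNReal.ofReal ((B^2 * (1 + (2*M - 1)⁻¹)) * a ^ (1 - 2*M)) := by
        congr 1
        ring


-- telescoping over Fin
lemma fin_telescope : ∀ (ℓ : ℕ) (φ : Fin (ℓ+1) → ℝ),
    ∑ n : Fin ℓ, (φ n.castSucc - φ n.succ) = φ 0 - φ (Fin.last ℓ) := by
  intro ℓ
  induction ℓ with
  | zero => intro φ; simp [Fin.last]
  | succ ℓ ih =>
      intro φ
      rw [Fin.sum_univ_castSucc]
      have hcomp : ∀ n : Fin ℓ, φ n.castSucc.castSucc - φ n.castSucc.succ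
          = (φ ∘ Fin.castSucc) n.castSucc - (φ ∘ Fin.castSucc) n.succ := by
        intro n
        simp only [Function.comp_apply, Fin.succ_castSucc]
      rw [Finset.sum_congr rfl (fun n _ => hcomp n), ih (φ ∘ Fin.castSucc)]
      simp only [Function.comp_apply, Fin.castSucc_zero, Fin.succ_last]
      have e : Fin.last ℓ.succ = Fin.last (ℓ+1) := rfl
      rw [e]
      ring

-- ℓρ ≤ ℓ1 inequality
lemma rpow_sum_le (ℓ : ℕ) (x : Fin ℓ → ℝ) (hx : ∀ n, 0 ≤ x n) (ρ : ℝ) (hρ : 1 < ρ) :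
    (∑ n, x n ^ ρ) ^ (1/ρ) ≤ ∑ n, x n := by
  have hρ0 : (0:ℝ) < ρ := by linarith
  set S := ∑ n, x n with hS
  have hS0 : 0 ≤ S := Finset.sum_nonneg (fun n _ => hx n)
  rcases eq_or_lt_of_le hS0 with h0 | hpos
  · -- S = 0, all terms zero
    have hall : ∀ n ∈ Finset.univ, x n = 0 := by
      intro n _
      have := Finset.sum_eq_zero_iff_of_nonneg (fun n _ => hx n) |>.1 h0.symm
      exact this n (Finset.mem_univ n)
    have : ∀ n ∈ (Finset.univ : Finset (Fin ℓ)), x n ^ ρ = 0 := by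
      intro n hn
      rw [hall n hn]
      exact Real.zero_rpow (by positivity)
    rw [Finset.sum_eq_zero this, Real.zero_rpow (by positivity), ← h0]
  · have key : ∀ n, x n ^ ρ ≤ S ^ (ρ - 1) * x n := by
      intro n
      rcases eq_or_lt_of_le (hx n) with h0 | hxn
      · rw [← h0, Real.zero_rpow (by positivity)]
        simp
      · have hle : x n ≤ S := Finset.single_le_sum (fun n _ => hx n) (Finset.mem_univ n)
        calc x n ^ ρ = x n ^ (ρ - 1) * x n := by
              rw [← Real.rpow_add_one hxn.ne']
              congr 1
              ring
          _ ≤ S ^ (ρ - 1) * x n :=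
              mul_le_mul_of_nonneg_right
                (Real.rpow_le_rpow (hx n) hle (by linarith)) (hx n)
    have hsum : ∑ n, x n ^ ρ ≤ S ^ ρ := by
      calc ∑ n, x n ^ ρ ≤ ∑ n, S ^ (ρ - 1) * x n := Finset.sum_le_sum (fun n _ => key n)
        _ = S ^ (ρ - 1) * S := by rw [← Finset.mul_sum]
        _ = S ^ ρ := by
            rw [← Real.rpow_add_one hpos.ne']
            congr 1
            ring
    calc (∑ n, x n ^ ρ) ^ (1/ρ) ≤ (S ^ ρ) ^ (1/ρ) :=
          Real.rpow_le_rpow (Finset.sum_nonneg (fun n _ => Real.rpow_nonneg (hx n) ρ))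
            hsum (by positivity)
      _ = S := by
          rw [← Real.rpow_mul hS0, mul_one_div, div_self hρ0.ne', Real.rpow_one]



lemma continuousOn_FD (k : ℕ) (M a : ℝ) :
    ContinuousOn (fun t => FD k M a t) (Set.Ioi 0) := by
  unfold FD
  apply ContinuousOn.add
  · apply continuousOn_finset_sum
    intro i _
    exact continuousOn_const.mul (continuousOn_trm _ _ _)
  · apply continuousOn_finset_sum
    intro i _
    exact continuousOn_const.mul (continuousOn_trm _ _ _)

lemma FD_integrable_bound (k : ℕ) (M : ℝ) (hM : 1/2 < M) :
    ∃ K > 0, ∀ a : ℝ, 0 < a →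
      IntegrableOn (fun t => FD k M a t) (Set.Ioi 0) ∧
      (∫ t in Set.Ioi (0:ℝ), |FD k M a t|) ≤ K * a ^ ((1:ℝ)/2 - M) := by
  obtain ⟨B, hB, henv⟩ := FD_envelope k M hM
  have hM2 : (0:ℝ) < M - 1/2 := by linarith
  refine ⟨B * (1 + (M - 1/2)⁻¹), by positivity, fun a ha => ?_⟩
  have hexp : -1/2 - M < -1 := by linarith
  have hpowa : (0:ℝ) ≤ a ^ (-1/2 - M) := Real.rpow_nonneg ha.le _
  have bound1 : ∀ t ∈ Set.Ioc (0:ℝ) a, |FD k M a t| ≤ B * a ^ (-1/2 - M) := by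
    intro t ht
    refine (henv a t ha ht.1).trans ?_
    have hle := min_env_le_one (-1/2 - M) (by linarith) ha ht.1
    calc B * (a ^ (-1/2 - M) * min ((t/a) ^ (1:ℝ)) ((t/a) ^ (-1/2 - M)))
        ≤ B * (a ^ (-1/2 - M) * 1) := by gcongr
      _ = B * a ^ (-1/2 - M) := by ring
  have bound2 : ∀ t ∈ Set.Ioi a, |FD k M a t| ≤ B * t ^ (-1/2 - M) := by
    intro t ht
    have htpos : 0 < t := ha.trans ht
    refine (henv a t ha htpos).trans ?_
    have e : a ^ (-1/2 - M) * (t/a) ^ (-1/2 - M) = t ^ (-1/2 - M) := by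
      rw [← Real.mul_rpow ha.le (by positivity)]
      congr 1
      field_simp
    calc B * (a ^ (-1/2 - M) * min ((t/a) ^ (1:ℝ)) ((t/a) ^ (-1/2 - M)))
        ≤ B * (a ^ (-1/2 - M) * (t/a) ^ (-1/2 - M)) := by
          gcongr
          exact min_le_right _ _
      _ = B * t ^ (-1/2 - M) := by rw [e]
  have int1 : IntegrableOn (fun t => FD k M a t) (Set.Ioc 0 a) := by
    apply Integrable.mono' (g := fun _ => B * a ^ (-1/2 - M))
    · exact MeasureTheory.integrableOn_const (by rw [Real.volume_Ioc]; exact ENNReal.ofReal_ne_top)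
    · exact ((continuousOn_FD k M a).mono Set.Ioc_subset_Ioi_self).aestronglyMeasurable
        measurableSet_Ioc
    · refine (ae_restrict_iff' measurableSet_Ioc).2 (Filter.Eventually.of_forall ?_)
      intro t ht
      rw [Real.norm_eq_abs]
      exact bound1 t ht
  have intg2 : IntegrableOn (fun t : ℝ => B * t ^ (-1/2 - M)) (Set.Ioi a) :=
    (integrableOn_Ioi_rpow_of_lt hexp ha).const_mul _
  have int2 : IntegrableOn (fun t => FD k M a t) (Set.Ioi a) := by
    apply Integrable.mono' intg2
    · exact ((continuousOn_FD k M a).mono (Set.Ioi_subset_Ioi ha.le)).aestronglyMeasurable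
        measurableSet_Ioi
    · refine (ae_restrict_iff' measurableSet_Ioi).2 (Filter.Eventually.of_forall ?_)
      intro t ht
      rw [Real.norm_eq_abs]
      exact bound2 t ht
  have intall : IntegrableOn (fun t => FD k M a t) (Set.Ioi 0) := by
    rw [← Set.Ioc_union_Ioi_eq_Ioi ha.le]
    exact int1.union int2
  refine ⟨intall, ?_⟩
  have hsplit : (∫ t in Set.Ioi (0:ℝ), |FD k M a t|)
      = (∫ t in Set.Ioc (0:ℝ) a, |FD k M a t|) + ∫ t in Set.Ioi a, |FD k M a t| := by
    rw [← Set.Ioc_union_Ioi_eq_Ioi ha.le,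
      setIntegral_union (Set.Ioc_disjoint_Ioi le_rfl) measurableSet_Ioi int1.abs int2.abs]
  rw [hsplit]
  have part1 : (∫ t in Set.Ioc (0:ℝ) a, |FD k M a t|) ≤ B * a ^ ((1:ℝ)/2 - M) := by
    calc (∫ t in Set.Ioc (0:ℝ) a, |FD k M a t|)
        ≤ ∫ _ in Set.Ioc (0:ℝ) a, B * a ^ (-1/2 - M) :=
          setIntegral_mono_on int1.abs
            (MeasureTheory.integrableOn_const
              (by rw [Real.volume_Ioc]; exact ENNReal.ofReal_ne_top))
            measurableSet_Ioc bound1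
      _ = a * (B * a ^ (-1/2 - M)) := by
          rw [setIntegral_const, Real.volume_real_Ioc_of_le ha.le, sub_zero, smul_eq_mul]
      _ = B * a ^ ((1:ℝ)/2 - M) := by
          rw [mul_comm a, mul_assoc, ← Real.rpow_add_one ha.ne',
            show -1/2 - M + 1 = (1:ℝ)/2 - M from by ring]
  have part2 : (∫ t in Set.Ioi a, |FD k M a t|)
      ≤ B * (a ^ ((1:ℝ)/2 - M) * (M - 1/2)⁻¹) := by
    calc (∫ t in Set.Ioi a, |FD k M a t|)
        ≤ ∫ t in Set.Ioi a, B * t ^ (-1/2 - M) :=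
          setIntegral_mono_on int2.abs intg2 measurableSet_Ioi bound2
      _ = B * (-a ^ (-1/2 - M + 1) / (-1/2 - M + 1)) := by
          rw [MeasureTheory.integral_const_mul, integral_Ioi_rpow_of_lt hexp ha]
      _ = B * (a ^ ((1:ℝ)/2 - M) * (M - 1/2)⁻¹) := by
          congr 1
          rw [show -1/2 - M + 1 = (1:ℝ)/2 - M from by ring]
          rw [div_eq_mul_inv, show ((1:ℝ)/2 - M)⁻¹ = -((M - 1/2)⁻¹) from by
            rw [show (1:ℝ)/2 - M = -(M - 1/2) from by ring, inv_neg]]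
          ring
  calc (∫ t in Set.Ioc (0:ℝ) a, |FD k M a t|) + ∫ t in Set.Ioi a, |FD k M a t|
      ≤ B * a ^ ((1:ℝ)/2 - M) + B * (a ^ ((1:ℝ)/2 - M) * (M - 1/2)⁻¹) := add_le_add part1 part2
    _ = B * (1 + (M - 1/2)⁻¹) * a ^ ((1:ℝ)/2 - M) := by ring

lemma Fresol_diff_bound (k : ℕ) (M a : ℝ) {s t : ℝ} (hs : 0 < s) (hst : s ≤ t) :
    |Fresol k M a t - Fresol k M a s| ≤ ∫ u in Set.Ioc s t, |FD k M a u| := by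
  have hsub : Set.uIcc s t ⊆ Set.Ioi 0 := by
    rw [Set.uIcc_of_le hst]
    intro x hx
    exact lt_of_lt_of_le hs hx.1
  have hderiv : ∀ x ∈ Set.uIcc s t, HasDerivAt (Fresol k M a) (FD k M a x) x :=
    fun x hx => hasDerivAt_Fresol k M a (hsub hx)
  have hcont : ContinuousOn (fun u => FD k M a u) (Set.uIcc s t) :=
    (continuousOn_FD k M a).mono hsub
  have hii : IntervalIntegrable (fun u => FD k M a u) volume s t := hcont.intervalIntegrable
  have heq := intervalIntegral.integral_eq_sub_of_hasDerivAt hderiv hii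
  rw [← heq]
  calc |∫ u in s..t, FD k M a u| ≤ ∫ u in s..t, |FD k M a u| := by
        simpa [Real.norm_eq_abs] using
          intervalIntegral.norm_integral_le_integral_norm (f := fun u => FD k M a u)
            (μ := volume) (a := s) (b := t) hst
    _ = ∫ u in Set.Ioc s t, |FD k M a u| := intervalIntegral.integral_of_le hst


lemma var_sum_bound (k : ℕ) (M a : ℝ)
    (hint : IntegrableOn (fun t => FD k M a t) (Set.Ioi 0))
    (ℓ : ℕ) (t : Fin (ℓ+1) → ℝ) (hanti : StrictAnti t) (hpos : ∀ i, 0 < t i) :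
    ∑ n : Fin ℓ, |Fresol k M a (t n.succ) - Fresol k M a (t n.castSucc)|
      ≤ ∫ u in Set.Ioi (0:ℝ), |FD k M a u| := by
  set Φ : ℝ → ℝ := fun u => ∫ x in Set.Ioc (0:ℝ) u, |FD k M a x| with hΦ
  have hintabs : IntegrableOn (fun x => |FD k M a x|) (Set.Ioi 0) := hint.abs
  have hioc : ∀ u : ℝ, IntegrableOn (fun x => |FD k M a x|) (Set.Ioc 0 u) :=
    fun u => hintabs.mono_set Set.Ioc_subset_Ioi_self
  have hstep : ∀ n : Fin ℓ, |Fresol k M a (t n.succ) - Fresol k M a (t n.castSucc)|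
      ≤ Φ (t n.castSucc) - Φ (t n.succ) := by
    intro n
    have hlt : t n.succ < t n.castSucc := hanti (Fin.castSucc_lt_succ (i := n))
    have hs := hpos n.succ
    have hsub2 : Set.Ioc (t n.succ) (t n.castSucc) ⊆ Set.Ioi (0:ℝ) :=
      fun x hx => lt_trans hs hx.1
    have hI2 : IntegrableOn (fun x => |FD k M a x|) (Set.Ioc (t n.succ) (t n.castSucc)) :=
      hintabs.mono_set hsub2
    have hun := setIntegral_union (f := fun x => |FD k M a x|) (μ := volume)
      (Set.Ioc_disjoint_Ioc_of_le le_rfl) measurableSet_Ioc (hioc (t n.succ)) hI2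
    rw [Set.Ioc_union_Ioc_eq_Ioc hs.le hlt.le] at hun
    have hdiff : Φ (t n.castSucc) - Φ (t n.succ)
        = ∫ x in Set.Ioc (t n.succ) (t n.castSucc), |FD k M a x| := by
      rw [hΦ]
      simp only
      linarith [hun]
    rw [abs_sub_comm, hdiff]
    exact Fresol_diff_bound k M a hs hlt.le
  have hΦ0 : 0 ≤ Φ (t (Fin.last ℓ)) :=
    setIntegral_nonneg measurableSet_Ioc (fun x _ => abs_nonneg _)
  have hΦtop : Φ (t 0) ≤ ∫ u in Set.Ioi (0:ℝ), |FD k M a u| :=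
    setIntegral_mono_set hintabs
      (Filter.Eventually.of_forall (fun x => abs_nonneg _))
      (HasSubset.Subset.eventuallyLE Set.Ioc_subset_Ioi_self)
  calc ∑ n : Fin ℓ, |Fresol k M a (t n.succ) - Fresol k M a (t n.castSucc)|
      ≤ ∑ n : Fin ℓ, (Φ (t n.castSucc) - Φ (t n.succ)) :=
        Finset.sum_le_sum (fun n _ => hstep n)
    _ = Φ (t 0) - Φ (t (Fin.last ℓ)) := fin_telescope ℓ (fun i => Φ (t i))
    _ ≤ Φ (t 0) := by linarith
    _ ≤ _ := hΦtop

/-- Let `M > 1/2`. There exists `C > 0` such that, for every `a > 0`, the function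
`F_a(t) = t^{k+1/2} ∂_t^k (t^{-M} e^{-a/t})` satisfies `sup_{t>0}|F_a(t)| ≤ C a^{1/2-M}`,
`(∫₀^∞ |F_a(t)|² dt/t)^{1/2} ≤ C a^{1/2-M}` and `V_ρ(F_a) ≤ C a^{1/2-M}`. -/
theorem statement13 (k : ℕ) (ρ : ℝ) (hρ : 2 < ρ) (M : ℝ) (hM : 1/2 < M) :
    ∃ C > 0, ∀ a : ℝ, 0 < a →
      (∀ t : ℝ, 0 < t → |Fresol k M a t| ≤ C * a ^ ((1:ℝ)/2 - M)) ∧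
      (∫⁻ t in Set.Ioi (0:ℝ), ENNReal.ofReal ((Fresol k M a t) ^ 2 / t)) ^ ((1:ℝ)/2)
        ≤ ENNReal.ofReal (C * a ^ ((1:ℝ)/2 - M)) ∧
      varOp ρ (Fresol k M a) ≤ ENNReal.ofReal (C * a ^ ((1:ℝ)/2 - M)) := by
  obtain ⟨B1, hB1, henv1⟩ := Fresol_envelope k M hM
  obtain ⟨K, hK, hKprop⟩ := FD_integrable_bound k M hM
  have hM1 : (0:ℝ) < 2*M - 1 := by linarith
  set X := B1^2 * (1 + (2*M - 1)⁻¹) with hX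
  have hXpos : 0 < X := by positivity
  set C2 := X ^ ((1:ℝ)/2) with hC2
  have hC2pos : 0 < C2 := Real.rpow_pos_of_pos hXpos _
  refine ⟨B1 + C2 + K, by positivity, fun a ha => ?_⟩
  have hppos : (0:ℝ) < a ^ ((1:ℝ)/2 - M) := Real.rpow_pos_of_pos ha _
  refine ⟨?_, ?_, ?_⟩
  · -- sup bound
    intro t ht
    refine (henv1 a t ha ht).trans ?_
    have hle := min_env_le_one (1/2 - M) (by linarith) ha ht
    calc B1 * (a ^ ((1:ℝ)/2 - M) * min ((t/a) ^ (1:ℝ)) ((t/a) ^ ((1:ℝ)/2 - M)))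
        ≤ B1 * (a ^ ((1:ℝ)/2 - M) * 1) := by gcongr
      _ = B1 * a ^ ((1:ℝ)/2 - M) := by ring
      _ ≤ (B1 + C2 + K) * a ^ ((1:ℝ)/2 - M) := by nlinarith
  · -- L2 bound
    have hl2 := l2_bound M hM B1 hB1 (Fresol k M) henv1 a ha
    have hstep := ENNReal.rpow_le_rpow hl2 (by norm_num : (0:ℝ) ≤ 1/2)
    refine hstep.trans ?_
    rw [ENNReal.ofReal_rpow_of_pos (by positivity)]
    apply ENNReal.ofReal_le_ofReal
    have e1 : ((B1^2 * (1 + (2*M - 1)⁻¹)) * a^(1-2*M)) ^ ((1:ℝ)/2)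
        = C2 * a ^ ((1:ℝ)/2 - M) := by
      rw [Real.mul_rpow hXpos.le (Real.rpow_nonneg ha.le _), hC2]
      congr 1
      rw [← Real.rpow_mul ha.le]
      congr 1
      ring
    rw [e1]
    nlinarith
  · -- variation bound
    obtain ⟨hint, hbound⟩ := hKprop a ha
    rw [varOp]
    apply iSup_le; intro ℓ
    apply iSup_le; intro t
    apply iSup_le; intro hanti
    apply iSup_le; intro hpos
    apply ENNReal.ofReal_le_ofReal
    have hsum := var_sum_bound k M a hint ℓ t hanti hpos
    have h1 : (∑ n : Fin ℓ, ‖Fresol k M a (t n.succ) - Fresol k M a (t n.castSucc)‖ ^ ρ) ^ (1/ρ)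
        ≤ ∑ n : Fin ℓ, ‖Fresol k M a (t n.succ) - Fresol k M a (t n.castSucc)‖ :=
      rpow_sum_le ℓ _ (fun n => norm_nonneg _) ρ (by linarith)
    calc (∑ n : Fin ℓ, ‖Fresol k M a (t n.succ) - Fresol k M a (t n.castSucc)‖ ^ ρ) ^ (1/ρ)
        ≤ ∑ n : Fin ℓ, ‖Fresol k M a (t n.succ) - Fresol k M a (t n.castSucc)‖ := h1
      _ = ∑ n : Fin ℓ, |Fresol k M a (t n.succ) - Fresol k M a (t n.castSucc)| := by
          simp [Real.norm_eq_abs]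
      _ ≤ ∫ u in Set.Ioi (0:ℝ), |FD k M a u| := hsum
      _ ≤ K * a ^ ((1:ℝ)/2 - M) := hbound
      _ ≤ (B1 + C2 + K) * a ^ ((1:ℝ)/2 - M) := by nlinarith
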